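/- arXiv:1701.00778 — 6 statements merged into one kernel-verified Lean document; each statement's English description precedes it below -/
import Mathlib

section
/- Under commutativity, associativity and condition (A), the set of real numbers occurring as entries of the matrices A_1, …, A_n (equivalently, as values a i j k) has at most n elements. -/
open Matrix BigOperators

/-- The coefficients are associative:
`∑_k (a i j k) (a k m p) = ∑_q (a j m q) (a i q p)`. -/
def IsAssocCoeff (n : ℕ) (a : Fin n → Fin n → Fin n → ℝ) : Prop :=
  ∀ i j m p, ∑ k, a i j k * a k m p = ∑ q, a j m q * a i q p

/-- The coefficients are commutative: `a i j k = a j i k`. -/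
def IsCommCoeff (n : ℕ) (a : Fin n → Fin n → Fin n → ℝ) : Prop :=
  ∀ i j k, a i j k = a j i k

/-- Condition (A): the set of columns `{a_{i,j}}` has exactly `n` distinct elements, and for
every `i` the columns of `A_i` (the `j ↦ a_{i,j}`) and of `B_i` (the `j ↦ a_{j,i}`) are
linearly independent. -/
def CondA (n : ℕ) (a : Fin n → Fin n → Fin n → ℝ) : Prop :=
  ({c : Fin n → ℝ | ∃ i j, c = fun k => a i j k}.ncard = n) ∧
  (∀ i, LinearIndependent ℝ (fun j => fun k => a i j k)) ∧
  (∀ i, LinearIndependent ℝ (fun j => fun k => a j i k))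

/-- Under commutativity, associativity and condition (A), at most `n` distinct
real numbers occur as entries of the matrices `A_1, …, A_n`. -/
theorem stmt_1 (n : ℕ) (hn : 1 ≤ n) (a : Fin n → Fin n → Fin n → ℝ)
    (hnonneg : ∀ i j k, 0 ≤ a i j k) (hsum : ∀ i j, ∑ k, a i j k = 1)
    (hcomm : IsCommCoeff n a) (hassoc : IsAssocCoeff n a) (hA : CondA n a) :
    {v : ℝ | ∃ i j k, a i j k = v}.ncard ≤ n := by
  classical
  obtain ⟨hC, hcols, hrows⟩ := hA
  have i0 : Fin n := ⟨0, hn⟩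
  haveI : Nonempty (Fin n) := ⟨i0⟩
  set e : Fin n → (Fin n → ℝ) := fun l => Pi.single l 1 with he
  set A : Fin n → Matrix (Fin n) (Fin n) ℝ := fun i => Matrix.of fun k j => a i j k with hAdef
  have hcol : ∀ i j, (A i) *ᵥ (e j) = fun k => a i j k := by
    intro i j; funext k
    simp [A, e, Matrix.mulVec, dotProduct, Pi.single_apply]
  -- multiplication rule
  have hAA : ∀ i j, A i * A j = ∑ k, a i j k • A k := by
    intro i j; ext p m
    have h1 : (A i * A j) p m = ∑ q, a j m q * a i q p := by
      simp [A, Matrix.mul_apply, mul_comm]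
    rw [h1, ← hassoc i j m p, Matrix.sum_apply]
    exact Finset.sum_congr rfl fun k _ => by simp [A, mul_comm]
  have hAcomm : ∀ i j, A i * A j = A j * A i := by
    intro i j; rw [hAA, hAA]
    exact Finset.sum_congr rfl fun k _ => by rw [hcomm i j k]
  set V : Submodule ℝ (Matrix (Fin n) (Fin n) ℝ) := Submodule.span ℝ (Set.range A) with hV
  have hAV : ∀ i, A i ∈ V := fun i => Submodule.subset_span ⟨i, rfl⟩
  have hrep : ∀ M ∈ V, ∃ c : Fin n → ℝ, ∑ i, c i • A i = M := fun M hM =>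
    (Submodule.mem_span_range_iff_exists_fun ℝ).mp hM
  have hVmul : ∀ M ∈ V, ∀ M' ∈ V, M * M' ∈ V := by
    intro M hM M' hM'
    obtain ⟨c, rfl⟩ := hrep M hM
    obtain ⟨c', rfl⟩ := hrep M' hM'
    rw [Finset.sum_mul]
    refine Submodule.sum_mem _ fun i _ => ?_
    rw [Finset.mul_sum]
    refine Submodule.sum_mem _ fun j _ => ?_
    rw [smul_mul_assoc, mul_smul_comm, hAA]
    refine Submodule.smul_mem _ _ (Submodule.smul_mem _ _ (Submodule.sum_mem _ fun k _ => ?_))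
    exact Submodule.smul_mem _ _ (hAV k)
  have hexp : ∀ c c' : Fin n → ℝ, (∑ i, c i • A i) * (∑ j, c' j • A j)
      = ∑ i, ∑ j, c i • c' j • (A i * A j) := by
    intro c c'
    rw [Finset.sum_mul]
    refine Finset.sum_congr rfl fun i _ => ?_
    rw [Finset.mul_sum]
    exact Finset.sum_congr rfl fun j _ => by rw [smul_mul_assoc, mul_smul_comm]
  have hVcomm : ∀ M ∈ V, ∀ M' ∈ V, M * M' = M' * M := by
    intro M hM M' hM'
    obtain ⟨c, rfl⟩ := hrep M hM
    obtain ⟨c', rfl⟩ := hrep M' hM'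
    rw [hexp c c', hexp c' c, Finset.sum_comm]
    refine Finset.sum_congr rfl fun i _ => Finset.sum_congr rfl fun j _ => ?_
    rw [hAcomm j i, smul_comm]
  have hsum_mulVec : ∀ (c : Fin n → ℝ) (v : Fin n → ℝ),
      (∑ i, c i • A i) *ᵥ v = ∑ i, c i • ((A i) *ᵥ v) := by
    intro c v; funext k
    simp only [Matrix.mulVec, dotProduct, Finset.sum_apply, Matrix.sum_apply,
      Matrix.smul_apply, Pi.smul_apply, smul_eq_mul, Finset.sum_mul, Finset.mul_sum]
    rw [Finset.sum_comm]
    exact Finset.sum_congr rfl fun i _ => Finset.sum_congr rfl fun j _ => by ring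
  -- injectivity of M ↦ M *ᵥ e i0 on V
  have hPhiInj : ∀ M ∈ V, ∀ M' ∈ V, M *ᵥ (e i0) = M' *ᵥ (e i0) → M = M' := by
    intro M hM M' hM' h
    obtain ⟨c, rfl⟩ := hrep M hM
    obtain ⟨c', rfl⟩ := hrep M' hM'
    rw [hsum_mulVec, hsum_mulVec] at h
    have h2 : ∑ i, (c i - c' i) • ((A i) *ᵥ (e i0)) = 0 := by
      simp only [sub_smul, Finset.sum_sub_distrib, h, sub_self]
    have h3 : ∑ i, (c i - c' i) • (fun k => a i i0 k) = 0 := by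
      simpa only [hcol] using h2
    have h4 := Fintype.linearIndependent_iff.mp (hrows i0) _ h3
    refine Finset.sum_congr rfl fun i _ => ?_
    have := h4 i
    have : c i = c' i := by linarith [sub_eq_zero.mp (by linarith : c i - c' i = 0)]
    rw [this]
  -- basis from columns A i *ᵥ e i0
  have hcard : Fintype.card (Fin n) = Module.finrank ℝ (Fin n → ℝ) := by
    simp [Module.finrank_pi]
  set b : Module.Basis (Fin n) ℝ (Fin n → ℝ) :=
    basisOfLinearIndependentOfCardEqFinrank (hrows i0) hcard with hb
  have hbi : ∀ i, b i = fun k => a i i0 k := by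
    intro i; rw [hb, coe_basisOfLinearIndependentOfCardEqFinrank]
  set N : Fin n → Matrix (Fin n) (Fin n) ℝ := fun j => ∑ i, (b.repr (e j) i) • A i with hN
  have hNV : ∀ j, N j ∈ V := fun j =>
    Submodule.sum_mem _ fun i _ => Submodule.smul_mem _ _ (hAV i)
  have hNe : ∀ j, (N j) *ᵥ (e i0) = e j := by
    intro j
    rw [hN, hsum_mulVec]
    have : ∀ i, (A i) *ᵥ (e i0) = b i := fun i => by rw [hbi, hcol]
    simp only [this]
    exact b.sum_repr (e j)
  -- symmetry
  have hsym : ∀ i j, A i * N j = A j * N i := by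
    intro i j
    refine hPhiInj _ (hVmul _ (hAV i) _ (hNV j)) _ (hVmul _ (hAV j) _ (hNV i)) ?_
    rw [← Matrix.mulVec_mulVec, ← Matrix.mulVec_mulVec, hNe, hNe, hcol, hcol]
    funext k; exact hcomm i j k
  -- N i0 = 1
  have hEM : ∀ M ∈ V, N i0 * M = M := by
    intro M hM
    refine hPhiInj _ (hVmul _ (hNV i0) _ hM) _ hM ?_
    rw [hVcomm _ (hNV i0) _ hM, ← Matrix.mulVec_mulVec, hNe]
  have hE1 : N i0 = 1 := by
    have hNej : ∀ j, (N i0) *ᵥ (e j) = e j := by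
      intro j
      rw [← hNe j, Matrix.mulVec_mulVec, hEM _ (hNV j)]
    ext k j
    have h1 := congrFun (hNej j) k
    have h2 : ((N i0) *ᵥ (e j)) k = (N i0) k j := by
      simp [e, Matrix.mulVec, dotProduct, Pi.single_apply]
    rw [h2] at h1
    rw [h1]
    simp [e, Matrix.one_apply, Pi.single_apply, eq_comm]
  have hAN : ∀ j, A j = A i0 * N j := by
    intro j
    rw [hsym i0 j, hE1, mul_one]
  -- columns of A i0 exhaust the column set
  have hCfin : ({c : Fin n → ℝ | ∃ i j, c = fun k => a i j k}).Finite := by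
    have : {c : Fin n → ℝ | ∃ i j, c = fun k => a i j k} ⊆
        Set.range (fun p : Fin n × Fin n => fun k => a p.1 p.2 k) := by
      rintro c ⟨i, j, rfl⟩; exact ⟨(i, j), rfl⟩
    exact (Set.finite_range _).subset this
  have hSC : Set.range (fun j => fun k => a i0 j k) =
      {c : Fin n → ℝ | ∃ i j, c = fun k => a i j k} := by
    apply Set.eq_of_subset_of_ncard_le
    · rintro c ⟨j, rfl⟩; exact ⟨i0, j, rfl⟩
    · rw [hC]
      have hinj : Function.Injective (fun j => fun k => a i0 j k) := (hcols i0).injective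
      rw [← Nat.card_coe_set_eq, Nat.card_range_of_injective hinj]
      simp
    · exact hCfin
  have hclos : ∀ i j, ∃ m, A i * N j = A m := by
    intro i j
    have hmem : (fun k => a i j k) ∈ Set.range (fun j => fun k => a i0 j k) := by
      rw [hSC]; exact ⟨i, j, rfl⟩
    obtain ⟨m, hm⟩ := hmem
    refine ⟨m, hPhiInj _ (hVmul _ (hAV i) _ (hNV j)) _ (hAV m) ?_⟩
    rw [← Matrix.mulVec_mulVec, hNe, hcol, ← hm, hAN m, ← Matrix.mulVec_mulVec, hNe, hcol]
  -- injectivity of mulVec of A i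
  have hAInj : ∀ i, Function.Injective ((A i).mulVec) := by
    intro i u u' h
    have h2 : ∑ j, (u j - u' j) • (fun k => a i j k) = 0 := by
      funext k
      have h3 := congrFun h k
      simp only [Matrix.mulVec, dotProduct] at h3
      simp only [Finset.sum_apply, Pi.smul_apply, smul_eq_mul, Pi.zero_apply]
      have : ∀ j, (A i) k j = a i j k := fun j => rfl
      calc ∑ j, (u j - u' j) * a i j k
          = ∑ j, (A i) k j * u j - ∑ j, (A i) k j * u' j := by
            rw [← Finset.sum_sub_distrib]
            exact Finset.sum_congr rfl fun j _ => by rw [this]; ring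
        _ = 0 := by rw [h3, sub_self]
    have h4 := Fintype.linearIndependent_iff.mp (hcols i) _ h2
    funext j
    have := h4 j
    linarith [sub_eq_zero.mp (by linarith : u j - u' j = 0)]
  -- group operation
  have hop : ∀ i j, ∃ m, N i * N j = N m := by
    intro i j
    obtain ⟨m, hm⟩ := hclos i j
    refine ⟨m, hPhiInj _ (hVmul _ (hNV i) _ (hNV j)) _ (hNV m) ?_⟩
    apply hAInj i0
    rw [Matrix.mulVec_mulVec, Matrix.mulVec_mulVec, ← mul_assoc, ← hAN i, hm, hAN m]
  -- permutation structure
  have hperm : ∀ m l, ∃ p, (N m) *ᵥ (e l) = e p := by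
    intro m l
    obtain ⟨p, hp⟩ := hop m l
    exact ⟨p, by rw [← hNe l, Matrix.mulVec_mulVec, hp, hNe]⟩
  choose σ hσ using hperm
  have hNInj : ∀ m, Function.Injective ((N m).mulVec) := by
    intro m u u' h
    apply hAInj m
    rw [hAN m, ← Matrix.mulVec_mulVec, ← Matrix.mulVec_mulVec, h]
  have heInj : Function.Injective e := by
    intro l l' h
    by_contra hne
    have h2 := congrFun h l
    rw [show e l l = 1 from Pi.single_eq_same l 1,
      show e l' l = 0 from Pi.single_eq_of_ne hne 1] at h2
    exact one_ne_zero h2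
  have hσbij : ∀ m, Function.Bijective (σ m) := by
    intro m
    rw [Fintype.bijective_iff_injective_and_card]
    refine ⟨fun l l' h => ?_, rfl⟩
    have h2 : (N m) *ᵥ (e l) = (N m) *ᵥ (e l') := by rw [hσ m l, hσ m l', h]
    exact heInj (hNInj m h2)
  -- key computation
  have hent : ∀ (M : Matrix (Fin n) (Fin n) ℝ) j k, (M *ᵥ (e j)) k = M k j := by
    intro M j k
    simp [e, Matrix.mulVec, dotProduct, Pi.single_apply]
  have key : ∀ i j k, ∃ l, a i j k = a i0 i0 l := by
    intro i j k
    obtain ⟨m, hm⟩ := hop i j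
    have h1 : (fun k => a i j k) = (N m) *ᵥ (fun k => a i0 i0 k) := by
      rw [← hcol i0 i0, Matrix.mulVec_mulVec, ← hVcomm _ (hAV i0) _ (hNV m), ← hm,
        ← mul_assoc, ← hAN i, ← Matrix.mulVec_mulVec, hNe, hcol]
    obtain ⟨l, hl⟩ := (hσbij m).2 k
    refine ⟨l, ?_⟩
    have h2 : a i j k = ((N m) *ᵥ (fun k => a i0 i0 k)) k := congrFun h1 k
    rw [h2]
    have h5 : ∀ l', (N m) k l' = if σ m l' = k then 1 else 0 := by
      intro l'
      rw [← hent (N m) l' k, hσ m l']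
      simp [e, Pi.single_apply, eq_comm]
    have h6 : ((N m) *ᵥ (fun k => a i0 i0 k)) k
        = ∑ l', (if σ m l' = k then 1 else 0) * a i0 i0 l' := by
      simp only [Matrix.mulVec, dotProduct]
      exact Finset.sum_congr rfl fun l' _ => by rw [h5]
    rw [h6, Finset.sum_eq_single l]
    · rw [if_pos hl, one_mul]
    · intro l' _ hne
      rw [if_neg (fun hc => hne ((hσbij m).1 (hc.trans hl.symm))), zero_mul]
    · intro hmem; exact absurd (Finset.mem_univ l) hmem
  -- conclude
  have hsub : {v : ℝ | ∃ i j k, a i j k = v} ⊆ Set.range (fun l => a i0 i0 l) := by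
    rintro v ⟨i, j, k, rfl⟩
    obtain ⟨l, hl⟩ := key i j k
    exact ⟨l, hl.symm⟩
  calc {v : ℝ | ∃ i j k, a i j k = v}.ncard
      ≤ (Set.range (fun l => a i0 i0 l)).ncard :=
        Set.ncard_le_ncard hsub (Set.finite_range _)
    _ ≤ n := by
        rw [← Set.image_univ]
        calc ((fun l => a i0 i0 l) '' Set.univ).ncard ≤ Set.univ.ncard :=
              Set.ncard_image_le Set.finite_univ
          _ = n := by rw [Set.ncard_univ]; simp
end

section
/- Under commutativity, associativity and condition (A), all columns a_{i,j} contain the same elements: for all i, j, p, q there exists a permutation σ of Fin n such that a i j k = a p q (σ k) for every k; in particular the multiset of entries of every column of every A_i coincides with the multiset of entries of a_{1,1}. -/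
open Matrix BigOperators

/-- Under commutativity, associativity and condition (A), all columns `a_{i,j}`
contain the same elements: each is a permutation of any other; in particular the multiset of
entries of every column of every `A_i` coincides with that of `a_{1,1}`. -/
theorem stmt_2 (n : ℕ) (hn : 1 ≤ n) (a : Fin n → Fin n → Fin n → ℝ)
    (hnonneg : ∀ i j k, 0 ≤ a i j k) (hsum : ∀ i j, ∑ k, a i j k = 1)
    (hcomm : IsCommCoeff n a) (hassoc : IsAssocCoeff n a) (hA : CondA n a) :
    (∀ i j p q, ∃ σ : Equiv.Perm (Fin n), ∀ k, a i j k = a p q (σ k)) ∧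
    (∀ i j, (Finset.univ.val.map fun k => a i j k) =
      (Finset.univ.val.map fun k => a ⟨0, hn⟩ ⟨0, hn⟩ k)) := by
  classical
  set e : Fin n := ⟨0, hn⟩ with he
  -- injectivity of the column maps
  have hinjA : ∀ i : Fin n, Function.Injective (fun j => fun k => a i j k) :=
    fun i => (hA.2.1 i).injective
  -- the set of all columns
  set S : Set (Fin n → ℝ) := {c : Fin n → ℝ | ∃ i j, c = fun k => a i j k} with hSdef
  have hScard : S.ncard = n := hA.1
  have hSfin : S.Finite := by
    by_contra h
    have : S.ncard = 0 := Set.Infinite.ncard h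
    omega
  -- the columns of `A_e` exhaust `S`
  have hrange : Set.range (fun m => fun k => a e m k) = S := by
    apply Set.eq_of_subset_of_ncard_le
    · rintro c ⟨m, rfl⟩
      exact ⟨e, m, rfl⟩
    · rw [hScard]
      rw [← Set.image_univ, Set.ncard_image_of_injective _ (hinjA e), Set.ncard_univ]
      simp
    · exact hSfin
  -- every column `a_{i,j}` equals some column `a_{e,m}`
  have hS : ∀ i j, ∃ m, (fun k => a i j k) = fun k => a e m k := by
    intro i j
    have : (fun k => a i j k) ∈ S := ⟨i, j, rfl⟩
    rw [← hrange] at this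
    obtain ⟨m, hm⟩ := this
    exact ⟨m, hm.symm⟩
  choose f hf using hS
  have hfa : ∀ i j k, a i j k = a e (f i j) k := by
    intro i j k; exact congrFun (hf i j) k
  -- `j ↦ f i j` is injective, hence a permutation
  have hfinj : ∀ i, Function.Injective (f i) := by
    intro i j₁ j₂ h
    apply hinjA i
    show (fun k => a i j₁ k) = fun k => a i j₂ k
    rw [hf i j₁, hf i j₂, h]
  have hfbij : ∀ i, Function.Bijective (f i) :=
    fun i => Finite.injective_iff_bijective.mp (hfinj i)
  set σ : Fin n → Equiv.Perm (Fin n) := fun i => Equiv.ofBijective (f i) (hfbij i) with hσ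
  have hσap : ∀ i j, σ i j = f i j := fun i j => rfl
  -- the key identity: `a i j k = a e j ((σ i)⁻¹ k)`
  have key : ∀ i j k, a i j k = a e j ((σ i).symm k) := by
    intro i j
    -- linear independence of the columns of `A_e`
    have hLI := (Fintype.linearIndependent_iff).mp (hA.2.1 e)
    have hsum0 :
        (∑ k, (a i j k - a e j ((σ i).symm k)) • (fun p => a e k p)) = 0 := by
      funext p
      rw [Finset.sum_apply]
      simp only [Pi.smul_apply, smul_eq_mul, Pi.zero_apply]
      have hsplit : ∑ k, (a i j k - a e j ((σ i).symm k)) * a e k p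
          = ∑ k, a i j k * a e k p - ∑ k, a e j ((σ i).symm k) * a e k p := by
        rw [← Finset.sum_sub_distrib]
        exact Finset.sum_congr rfl fun k _ => by ring
      rw [hsplit, sub_eq_zero]
      have h1 : ∑ k, a i j k * a e k p = ∑ k, a i j k * a k e p := by
        refine Finset.sum_congr rfl fun k _ => ?_
        rw [hcomm e k p]
      have h2 : ∑ k, a e j ((σ i).symm k) * a e k p
          = ∑ q, a e j q * a e (σ i q) p := by
        rw [← Equiv.sum_comp (σ i) (fun k => a e j ((σ i).symm k) * a e k p)]
        simp
      rw [h1, h2, hassoc i j e p]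
      refine Finset.sum_congr rfl fun q _ => ?_
      rw [hcomm j e q, hfa i q p, hσap]
    have := hLI (fun k => a i j k - a e j ((σ i).symm k)) hsum0
    intro k
    have hk : a i j k - a e j ((σ i).symm k) = 0 := this k
    linarith
  -- every column is an entry-permutation of column `a_{e,e}`
  have main : ∀ i j k, a i j k = a e e ((σ j).symm ((σ i).symm k)) := by
    intro i j k
    rw [key i j k, hcomm e j, key j e]
  constructor
  · intro i j p q
    refine ⟨((σ i).symm.trans (σ j).symm).trans ((σ q).trans (σ p)), ?_⟩
    intro k
    rw [main i j k, main p q]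
    simp
  · intro i j
    have : (fun k => a i j k) = (fun k => a e e k) ∘ (fun k => (σ j).symm ((σ i).symm k)) := by
      funext k; exact main i j k
    rw [this, ← Multiset.map_map]
    congr 1
    have : (Finset.univ.val.map fun k => (σ j).symm ((σ i).symm k))
        = (Finset.univ.map ((σ i).symm.trans (σ j).symm).toEmbedding).val := rfl
    rw [this, Finset.map_univ_equiv]
end

section
/- Under commutativity, associativity, condition (A), and the additional assumption that the nonzero entries of the column a_{1,1} are pairwise distinct, every row of every matrix A_i contains the same elements as the columns: for each i and each row index k, the multiset of entries (a i j k)_{j=1,…,n} of the k-th row of A_i equals the multiset of entries of the column a_{1,1}. -/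
open Matrix BigOperators

/-- Under commutativity, associativity, condition (A), and the assumption that
the nonzero entries of the column `a_{1,1}` are pairwise distinct, every row of every `A_i`
contains the same elements as the columns: the multiset of entries of the `k`-th row of `A_i`
equals the multiset of entries of the column `a_{1,1}`. -/
theorem stmt_4 (n : ℕ) (hn : 1 ≤ n) (a : Fin n → Fin n → Fin n → ℝ)
    (hnonneg : ∀ i j k, 0 ≤ a i j k) (hsum : ∀ i j, ∑ k, a i j k = 1)
    (hcomm : IsCommCoeff n a) (hassoc : IsAssocCoeff n a) (hA : CondA n a)
    (hdist : ∀ k k' : Fin n, a ⟨0, hn⟩ ⟨0, hn⟩ k ≠ 0 → a ⟨0, hn⟩ ⟨0, hn⟩ k' ≠ 0 →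
      a ⟨0, hn⟩ ⟨0, hn⟩ k = a ⟨0, hn⟩ ⟨0, hn⟩ k' → k = k') :
    ∀ i k, (Finset.univ.val.map fun j => a i j k) =
      (Finset.univ.val.map fun k' => a ⟨0, hn⟩ ⟨0, hn⟩ k') := by
  obtain ⟨hcard, hAind, hBind⟩ := hA
  set i0 : Fin n := ⟨0, hn⟩ with hi0def
  intro i p
  -- injectivity of column families
  have injA : ∀ i : Fin n, Function.Injective (fun j => (fun k => a i j k)) :=
    fun i => (hAind i).injective
  have injB : ∀ j : Fin n, Function.Injective (fun i => (fun k => a i j k)) :=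
    fun j => (hBind j).injective
  -- every column equals some a_{r, i0}
  have hsurj : ∀ i j : Fin n, ∃ r, (fun k => a i j k) = fun k => a r i0 k := by
    intro i j
    have hSfin : ({c : Fin n → ℝ | ∃ i j, c = fun k => a i j k}).Finite := by
      have hEq : {c : Fin n → ℝ | ∃ i j, c = fun k => a i j k}
          = Set.range (fun pr : Fin n × Fin n => fun k => a pr.1 pr.2 k) := by
        ext c
        constructor
        · rintro ⟨i', j', rfl⟩; exact ⟨(i', j'), rfl⟩
        · rintro ⟨⟨i', j'⟩, rfl⟩; exact ⟨i', j', rfl⟩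
      rw [hEq]; exact Set.finite_range _
    have hTS : Set.range (fun r : Fin n => fun k => a r i0 k)
        ⊆ {c : Fin n → ℝ | ∃ i j, c = fun k => a i j k} := by
      rintro c ⟨r, rfl⟩; exact ⟨r, i0, rfl⟩
    have hTcard : (Set.range (fun r : Fin n => fun k => a r i0 k)).ncard = n := by
      rw [← Set.image_univ, Set.ncard_image_of_injective _ (injB i0), Set.ncard_univ]
      simp
    have hST := Set.eq_of_subset_of_ncard_le hTS (by rw [hTcard, hcard]) hSfin
    have hmem : (fun k => a i j k) ∈ {c : Fin n → ℝ | ∃ i j, c = fun k => a i j k} :=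
      ⟨i, j, rfl⟩
    rw [← hST] at hmem
    obtain ⟨r, hr⟩ := hmem
    exact ⟨r, hr.symm⟩
  choose ρ hρ using hsurj
  -- pointwise version
  have hρ' : ∀ i j k, a i j k = a (ρ i j) i0 k := fun i j k => congrFun (hρ i j) k
  -- injectivity of ρ in each variable
  have injρR : ∀ i : Fin n, Function.Injective (ρ i) := by
    intro i j j' h
    apply injA i
    show (fun k => a i j k) = fun k => a i j' k
    rw [hρ i j, hρ i j', h]
  have injρL : ∀ m : Fin n, Function.Injective (fun k => ρ k m) := by
    intro m k k' h
    apply injB m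
    show (fun k'' => a k m k'') = fun k'' => a k' m k''
    rw [hρ k m, hρ k' m]
    exact congrArg (fun r => fun k'' => a r i0 k'') h
  have bijρL : ∀ m : Fin n, Function.Bijective (fun k => ρ k m) :=
    fun m => Finite.injective_iff_bijective.mp (injρL m)
  -- KEY identity: a i0 m (ρ k m) = a i0 i0 k
  have key : ∀ m k : Fin n, a i0 m (ρ k m) = a i0 i0 k := by
    intro m k
    set e : Fin n ≃ Fin n := Equiv.ofBijective _ (bijρL m) with hedef
    have heapp : ∀ k', e k' = ρ k' m := fun _ => rfl
    have hz : ∀ p', ∑ q, (a i0 i0 (e.symm q) - a i0 m q) * a i0 q p' = 0 := by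
      intro p'
      have h1 : ∑ q, a i0 i0 (e.symm q) * a i0 q p'
          = ∑ k', a i0 i0 k' * a k' m p' := by
        rw [← Equiv.sum_comp e (fun q => a i0 i0 (e.symm q) * a i0 q p')]
        refine Finset.sum_congr rfl (fun k' _ => ?_)
        rw [Equiv.symm_apply_apply, heapp]
        have : a k' m p' = a i0 (ρ k' m) p' := by
          rw [hρ' k' m p', hcomm]
        rw [this]
      have h2 := hassoc i0 i0 m p'
      simp only [sub_mul, Finset.sum_sub_distrib, h1, h2, sub_self]
    have hlin := Fintype.linearIndependent_iff.mp (hAind i0)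
    have hcoef := hlin (fun q => a i0 i0 (e.symm q) - a i0 m q) ?_ (e k)
    · have := hcoef
      rw [Equiv.symm_apply_apply, heapp] at this
      linarith [this]
    · funext p'
      simpa [Finset.sum_apply, mul_comm] using hz p'
  -- assemble: for each j, find the preimage under ρ · (ρ i j) of p
  have hgex : ∀ j : Fin n, ∃ kk, ρ kk (ρ i j) = p := fun j => (bijρL (ρ i j)).surjective p
  choose g hg using hgex
  have hval : ∀ j, a i j p = a i0 i0 (g j) := by
    intro j
    rw [hρ' i j p, hcomm (ρ i j) i0 p]
    rw [show p = ρ (g j) (ρ i j) from (hg j).symm]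
    exact key (ρ i j) (g j)
  have hginj : Function.Injective g := by
    intro j j' h
    apply injρR i
    have h1 := hg j
    rw [h] at h1
    exact injρR (g j') (h1.trans (hg j').symm)
  have hgbij := Finite.injective_iff_bijective.mp hginj
  set eg : Fin n ≃ Fin n := Equiv.ofBijective g hgbij with hegdef
  have hmapuniv : Finset.univ.val.map g = Finset.univ.val := by
    have h2 : (Finset.univ.map eg.toEmbedding).val = Finset.univ.val :=
      congrArg Finset.val (Finset.map_univ_equiv eg)
    rw [Finset.map_val] at h2
    exact h2
  calc (Finset.univ.val.map fun j => a i j p)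
      = Finset.univ.val.map (fun j => a i0 i0 (g j)) := by
        apply Multiset.map_congr rfl
        intro j _
        exact hval j
    _ = Multiset.map (fun k' => a i0 i0 k') (Finset.univ.val.map g) := by
        rw [Multiset.map_map]; rfl
    _ = Finset.univ.val.map (fun k' => a i0 i0 k') := by rw [hmapuniv]
end

section
/- Under commutativity, associativity, condition (A), and the additional assumption that the nonzero entries of the column a_{1,1} are pairwise distinct, for every nonzero real value v occurring as an entry of some A_i the following Latin-square property holds: for all i, k there exists exactly one j with a i j k = v, and for all j, k there exists exactly one i with a i j k = v. -/
open Matrix BigOperators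

/-- Under commutativity, associativity, condition (A), and pairwise-distinct
nonzero entries of `a_{1,1}`, each nonzero entry value `v` has the Latin-square property:
for all `i, k` there is exactly one `j` with `a i j k = v`, and for all `j, k` exactly one
`i` with `a i j k = v`. -/
theorem stmt_5 (n : ℕ) (hn : 1 ≤ n) (a : Fin n → Fin n → Fin n → ℝ)
    (hnonneg : ∀ i j k, 0 ≤ a i j k) (hsum : ∀ i j, ∑ k, a i j k = 1)
    (hcomm : IsCommCoeff n a) (hassoc : IsAssocCoeff n a) (hA : CondA n a)
    (hdist : ∀ k k' : Fin n, a ⟨0, hn⟩ ⟨0, hn⟩ k ≠ 0 → a ⟨0, hn⟩ ⟨0, hn⟩ k' ≠ 0 →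
      a ⟨0, hn⟩ ⟨0, hn⟩ k = a ⟨0, hn⟩ ⟨0, hn⟩ k' → k = k') :
    ∀ v : ℝ, v ≠ 0 → (∃ i j k, a i j k = v) →
      (∀ i k, ∃! j, a i j k = v) ∧ (∀ j k, ∃! i, a i j k = v) := by
  obtain ⟨hncard, hLI1, hLI2⟩ := hA
  set e : Fin n := ⟨0, hn⟩ with he
  have hcomm' : ∀ i j, a i j = a j i := fun i j => funext fun k => hcomm i j k
  have hψinj : Function.Injective (fun i => a i e) := (hLI2 e).injective
  -- the set of columns is finite
  have hfin : ({c : Fin n → ℝ | ∃ i j, c = fun k => a i j k}).Finite := by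
    apply Set.Finite.subset (Set.finite_range (fun p : Fin n × Fin n => a p.1 p.2))
    rintro c ⟨i, j, rfl⟩
    exact ⟨(i, j), rfl⟩
  have hrsub : Set.range (fun i => a i e) ⊆ {c : Fin n → ℝ | ∃ i j, c = fun k => a i j k} := by
    rintro c ⟨i, rfl⟩; exact ⟨i, e, rfl⟩
  have hrcard : (Set.range (fun i => a i e)).ncard = n := by
    rw [← Set.image_univ, Set.ncard_image_of_injective _ hψinj, Set.ncard_univ,
      Nat.card_eq_fintype_card, Fintype.card_fin]
  have hre : Set.range (fun i => a i e) = {c : Fin n → ℝ | ∃ i j, c = fun k => a i j k} :=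
    Set.eq_of_subset_of_ncard_le hrsub (by rw [hrcard, hncard]) hfin
  have hex' : ∀ i j, ∃ m, a m e = a i j := by
    intro i j
    have hmem : a i j ∈ Set.range (fun i => a i e) := hre.symm.subset ⟨i, j, rfl⟩
    obtain ⟨m, hm⟩ := hmem
    exact ⟨m, hm⟩
  choose op hop using hex'
  have hop_comm : ∀ i j, op i j = op j i := by
    intro i j
    apply hψinj
    show a (op i j) e = a (op j i) e
    rw [hop, hop, hcomm']
  have hcancel : ∀ (i) {j j'}, op i j = op i j' → j = j' := by
    intro i j j' h
    have h2 : a i j = a i j' := by rw [← hop i j, ← hop i j', h]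
    exact (hLI1 i).injective h2
  have hcancel' : ∀ {j j'} (i : Fin n), op j i = op j' i → j = j' := by
    intro j j' i h
    exact hcancel i (by rw [hop_comm i j, hop_comm i j', h])
  have hsurj : ∀ i k, ∃ j, op i j = k := by
    intro i k
    have hinj : Function.Injective (op i) := fun j j' h => hcancel i h
    exact (Finite.injective_iff_surjective.mp hinj) k
  have hsurj' : ∀ m p, ∃ k, op k m = p := by
    intro m p
    have hinj : Function.Injective (fun k => op k m) := fun j j' h => hcancel' m h
    exact (Finite.injective_iff_surjective.mp hinj) p
  -- injectivity of the linear map given by A_e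
  have hAinj : ∀ x y : Fin n → ℝ, (∀ p, ∑ q, x q * a e q p = ∑ q, y q * a e q p) → x = y := by
    intro x y h
    have h0 : (∑ q, (x q - y q) • (fun k => a e q k)) = (0 : Fin n → ℝ) := by
      funext p
      have hp := h p
      simp only [Finset.sum_apply, Pi.smul_apply, smul_eq_mul, Pi.zero_apply, sub_mul,
        Finset.sum_sub_distrib]
      linarith
    have h1 := Fintype.linearIndependent_iff.mp (hLI1 e) (fun q => x q - y q) h0
    funext q
    have h2 : x q - y q = 0 := h1 q
    simpa [sub_eq_zero] using h2
  -- KEY: the first row of the table is a "shifted" version of a e e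
  have hkey : ∀ m p, a e m p = ∑ k, if op k m = p then a e e k else 0 := by
    intro m p
    have hx : (a e m) = fun p => ∑ k, if op k m = p then a e e k else 0 := by
      apply hAinj
      intro p
      have hL : ∑ q, a e m q * a e q p = ∑ k, a e e k * a k m p := (hassoc e e m p).symm
      rw [hL]
      calc ∑ k, a e e k * a k m p
          = ∑ k, a e e k * a e (op k m) p := by
            apply Finset.sum_congr rfl; intro k _
            congr 1
            rw [← hop k m, hcomm']
        _ = ∑ k, ∑ q, if op k m = q then a e e k * a e q p else 0 := by
            apply Finset.sum_congr rfl; intro k _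
            rw [Finset.sum_ite_eq]
            simp
        _ = ∑ q, (∑ k, if op k m = q then a e e k else 0) * a e q p := by
            rw [Finset.sum_comm]
            apply Finset.sum_congr rfl; intro q _
            rw [Finset.sum_mul]
            apply Finset.sum_congr rfl; intro k _
            split <;> simp
    exact congrFun hx p
  have hval : ∀ i j k₀, a i j (op k₀ (op i j)) = a e e k₀ := by
    intro i j k₀
    have h1 : a i j = a e (op i j) := by rw [← hop i j, hcomm']
    rw [h1, hkey]
    calc ∑ k, (if op k (op i j) = op k₀ (op i j) then a e e k else 0)
        = ∑ k, (if k = k₀ then a e e k else 0) := by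
          apply Finset.sum_congr rfl; intro k _
          congr 1
          exact propext ⟨fun h => hcancel' (op i j) h, fun h => by rw [h]⟩
      _ = a e e k₀ := by simp
  have hform : ∀ i j p, ∃ g, op g (op i j) = p ∧ a i j p = a e e g := by
    intro i j p
    obtain ⟨g, hg⟩ := hsurj' (op i j) p
    exact ⟨g, hg, by rw [← hg, hval]⟩
  -- main conclusion
  intro v hv hvex
  obtain ⟨i₀, j₀, k₀, hv0⟩ := hvex
  obtain ⟨g, hg, hgv⟩ := hform i₀ j₀ k₀
  have hwg : a e e g = v := by rw [← hv0, hgv]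
  have huniqg : ∀ g', a e e g' = v → g' = g := by
    intro g' h'
    exact hdist g' g (by rw [h']; exact hv) (by rw [hwg]; exact hv) (by rw [h', hwg])
  constructor
  · intro i k
    obtain ⟨t, ht⟩ := hsurj g k
    obtain ⟨j, hj⟩ := hsurj i t
    refine ⟨j, ?_, ?_⟩
    · have hk : op g (op i j) = k := by rw [hj, ht]
      show a i j k = v
      rw [← hk, hval, hwg]
    · intro j' hj'
      obtain ⟨g', hg', hg'v⟩ := hform i j' k
      have hgg : g' = g := huniqg g' (by rw [← hg'v, hj'])
      subst hgg
      have h2 : op g' (op i j') = op g' (op i j) := by rw [hg', hj, ht]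
      exact hcancel i (hcancel g' h2)
  · intro j k
    obtain ⟨t, ht⟩ := hsurj g k
    obtain ⟨i, hi⟩ := hsurj' j t
    refine ⟨i, ?_, ?_⟩
    · have hk : op g (op i j) = k := by rw [hi, ht]
      show a i j k = v
      rw [← hk, hval, hwg]
    · intro i' hi'
      obtain ⟨g', hg', hg'v⟩ := hform i' j k
      have hgg : g' = g := huniqg g' (by rw [← hg'v, hi'])
      subst hgg
      have h2 : op g' (op i' j) = op g' (op i j) := by rw [hg', hi, ht]
      exact hcancel' j (hcancel g' h2)
end

section
/- Under commutativity, associativity, condition (A), and the additional assumption that the nonzero entries of the column a_{1,1} are pairwise distinct, for every nonzero value v occurring among the entries: if a i j k = v and a j m p = v, then the columns a_{k,m} and a_{i,p} are equal (i.e., a k m q = a i p q for all q). -/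
open Matrix BigOperators

/-- Key lemma: for fixed `i, m`, there is a permutation `e` with `a_{i, e k} = a_{k, m}`
(matching up the columns of `A_i` and `B_m`, both of which enumerate the `n`-element set
of all columns), and moreover `a i j k = a j m (e k)` for all `j, k`, by matching
coefficients in the associativity identity viewed as an identity of vectors expressed
in the basis formed by the columns of `A_i`. -/
lemma key_lemma (n : ℕ) (hn : 1 ≤ n) (a : Fin n → Fin n → Fin n → ℝ)
    (hassoc : IsAssocCoeff n a) (hA : CondA n a) (i m : Fin n) :
    ∃ e : Equiv.Perm (Fin n),
      (∀ k, a i (e k) = a k m) ∧ (∀ j k, a i j k = a j m (e k)) := by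
  obtain ⟨hcard, hAi, hBi⟩ := hA
  set S : Set (Fin n → ℝ) := {c : Fin n → ℝ | ∃ i j, c = fun k => a i j k} with hSdef
  have hSfin : S.Finite := by
    by_contra h
    rw [Set.Infinite.ncard h] at hcard
    omega
  have hinjAi : Function.Injective (a i) := (hAi i).injective
  have hinjBm : Function.Injective (fun k => a k m) := (hBi m).injective
  have hrange : ∀ (F : Fin n → Fin n → ℝ), Function.Injective F →
      (Set.range F).ncard = n := by
    intro F hF
    rw [← Set.image_univ, Set.ncard_image_of_injective _ hF, Set.ncard_univ,
      Nat.card_eq_fintype_card, Fintype.card_fin]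
  have hTi : Set.range (a i) = S := by
    apply Set.eq_of_subset_of_ncard_le
    · rintro c ⟨q, rfl⟩; exact ⟨i, q, rfl⟩
    · rw [hcard, hrange _ hinjAi]
    · exact hSfin
  have hmem : ∀ k, a k m ∈ Set.range (a i) := by
    intro k
    rw [hTi]
    exact ⟨k, m, rfl⟩
  choose e0 he0 using hmem
  have he0inj : Function.Injective e0 := by
    intro k k' h
    apply hinjBm
    simp only
    rw [← he0 k, ← he0 k', h]
  have he0bij : Function.Bijective e0 := Finite.injective_iff_bijective.mp he0inj
  refine ⟨Equiv.ofBijective e0 he0bij, he0, ?_⟩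
  have hcoef : ∀ j' t, a i j' ((Equiv.ofBijective e0 he0bij).symm t) - a j' m t = 0 := by
    intro j'
    apply Fintype.linearIndependent_iff.mp (hAi i)
    funext p
    simp only [Finset.sum_apply, Pi.smul_apply, smul_eq_mul, Pi.zero_apply, sub_mul]
    rw [Finset.sum_sub_distrib]
    have h2 : ∑ t, a i j' ((Equiv.ofBijective e0 he0bij).symm t) * a i t p
        = ∑ k, a i j' k * a k m p := by
      rw [← Equiv.sum_comp (Equiv.ofBijective e0 he0bij)
        (fun t => a i j' ((Equiv.ofBijective e0 he0bij).symm t) * a i t p)]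
      refine Finset.sum_congr rfl fun k _ => ?_
      rw [Equiv.symm_apply_apply]
      have := congrFun (he0 k) p
      simp only [Equiv.ofBijective_apply]
      rw [this]
    rw [h2, hassoc i j' m p, sub_eq_zero]
  intro j' k
  have := hcoef j' (Equiv.ofBijective e0 he0bij k)
  rw [Equiv.symm_apply_apply, sub_eq_zero] at this
  exact this

/-- Under commutativity, associativity, condition (A), and pairwise-distinct
nonzero entries of `a_{1,1}`: for every nonzero entry value `v`, if `a i j k = v` and
`a j m p = v`, then the columns `a_{k,m}` and `a_{i,p}` coincide. -/
theorem stmt_6 (n : ℕ) (hn : 1 ≤ n) (a : Fin n → Fin n → Fin n → ℝ)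
    (hnonneg : ∀ i j k, 0 ≤ a i j k) (hsum : ∀ i j, ∑ k, a i j k = 1)
    (hcomm : IsCommCoeff n a) (hassoc : IsAssocCoeff n a) (hA : CondA n a)
    (hdist : ∀ k k' : Fin n, a ⟨0, hn⟩ ⟨0, hn⟩ k ≠ 0 → a ⟨0, hn⟩ ⟨0, hn⟩ k' ≠ 0 →
      a ⟨0, hn⟩ ⟨0, hn⟩ k = a ⟨0, hn⟩ ⟨0, hn⟩ k' → k = k') :
    ∀ v : ℝ, v ≠ 0 → (∃ i' j' k', a i' j' k' = v) →
      ∀ i j k m p, a i j k = v → a j m p = v → ∀ q, a k m q = a i p q := by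
  intro v hv _ i j k m p hijk hjmp q
  obtain ⟨e, he1, he2⟩ := key_lemma n hn a hassoc hA i m
  -- entries of the column `a_{j,m}` are a permutation of those of `a_{1,1}`
  obtain ⟨f, _, hf⟩ := key_lemma n hn a hassoc hA ⟨0, hn⟩ j
  obtain ⟨g, _, hg⟩ := key_lemma n hn a hassoc hA ⟨0, hn⟩ m
  have h11 : ∀ r, a ⟨0, hn⟩ ⟨0, hn⟩ r = a j m (g (f r)) := by
    intro r
    rw [hf ⟨0, hn⟩ r, hg j (f r)]
  -- nonzero entries of the column `a_{j,m}` are pairwise distinct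
  have hdist' : ∀ s t : Fin n, a j m s ≠ 0 → a j m t ≠ 0 → a j m s = a j m t → s = t := by
    intro s t hs ht hst
    set c : Equiv.Perm (Fin n) := f.trans g with hc
    have hcs : a j m (c (c.symm s)) = a j m s := by rw [Equiv.apply_symm_apply]
    have hct : a j m (c (c.symm t)) = a j m t := by rw [Equiv.apply_symm_apply]
    have h1 : a ⟨0, hn⟩ ⟨0, hn⟩ (c.symm s) = a j m s := by
      rw [h11 (c.symm s)]; exact hcs
    have h2 : a ⟨0, hn⟩ ⟨0, hn⟩ (c.symm t) = a j m t := by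
      rw [h11 (c.symm t)]; exact hct
    have := hdist (c.symm s) (c.symm t) (by rw [h1]; exact hs) (by rw [h2]; exact ht)
      (by rw [h1, h2]; exact hst)
    calc s = c (c.symm s) := (Equiv.apply_symm_apply c s).symm
      _ = c (c.symm t) := by rw [this]
      _ = t := Equiv.apply_symm_apply c t
  -- from `a i j k = a j m (e k) = v = a j m p` conclude `e k = p`
  have hek : e k = p := by
    apply hdist'
    · rw [← he2 j k, hijk]; exact hv
    · rw [hjmp]; exact hv
    · rw [← he2 j k, hijk, hjmp]
  have := he1 k
  rw [hek] at this
  exact (congrFun this q).symm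
end

section
/- (Main result, converse direction: semihypergroup laws) Let · be a commutative group structure on Fin n with regular representation matrices G_k, let m be a probability vector (m_k ≥ 0, ∑_k m_k = 1), and set M = ∑_k m_k · G_k. Define a i j k := (M * G_i)_{k,j}. Then a i j k ≥ 0 and ∑_k a i j k = 1 for all i, j; the coefficients are commutative (a i j k = a j i k for all i, j, k); and they are associative (∑_k (a i j k) · (a k m p) = ∑_q (a j m q) · (a i q p) for all i, j, m, p). -/
open Matrix BigOperators

/-- Main result, converse direction: semihypergroup laws: given a commutative
group structure on `Fin n` with regular representation matrices `G_k` and a probability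
vector `m`, with `M = ∑_k m_k • G_k` and `a i j k := (M * G_i)_{k,j}`, the coefficients are
nonnegative, sum to `1` in `k`, and are commutative and associative. -/
theorem stmt_10 (n : ℕ) (hn : 1 ≤ n) [CommGroup (Fin n)]
    (m : Fin n → ℝ) (hm : ∀ k, 0 ≤ m k) (hm1 : ∑ k, m k = 1) :
    let G : Fin n → Matrix (Fin n) (Fin n) ℝ :=
      fun k => Matrix.of fun p j => if p = k * j then (1 : ℝ) else 0
    let M : Matrix (Fin n) (Fin n) ℝ := ∑ k, m k • G k
    let a : Fin n → Fin n → Fin n → ℝ := fun i j k => (M * G i) k j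
    (∀ i j k, 0 ≤ a i j k) ∧
    (∀ i j, ∑ k, a i j k = 1) ∧
    (∀ i j k, a i j k = a j i k) ∧
    (∀ i j w p, ∑ k, a i j k * a k w p = ∑ q, a j w q * a i q p) := by
  haveI : NeZero n := ⟨Nat.one_le_iff_ne_zero.mp hn⟩
  intro G M a
  have key : ∀ i j k, a i j k = M k (i * j) := by
    intro i j k
    simp only [a, Matrix.mul_apply, G, Matrix.of_apply, mul_ite, mul_one, mul_zero]
    rw [Finset.sum_ite_eq' Finset.univ (i*j) (M k), if_pos (Finset.mem_univ _)]
  have hMnn : ∀ k l, 0 ≤ M k l := by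
    intro k l
    simp only [M, Matrix.sum_apply, Matrix.smul_apply, G, Matrix.of_apply, smul_eq_mul]
    exact Finset.sum_nonneg fun t _ => mul_nonneg (hm t) (by split <;> norm_num)
  have hMsum : ∀ l, ∑ k, M k l = 1 := by
    intro l
    simp only [M, Matrix.sum_apply, Matrix.smul_apply, G, Matrix.of_apply, smul_eq_mul,
      mul_ite, mul_one, mul_zero]
    rw [Finset.sum_comm]
    rw [Finset.sum_congr rfl fun t _ => Finset.sum_ite_eq' Finset.univ (t*l) (fun _ => m t)]
    simpa using hm1
  have collapse : ∀ (c : Fin n) (f : Fin n → ℝ), ∑ k, M k c * f k = ∑ t, m t * f (t * c) := by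
    intro c f
    simp only [M, Matrix.sum_apply, Matrix.smul_apply, G, Matrix.of_apply, smul_eq_mul,
      mul_ite, mul_one, mul_zero, Finset.sum_mul, ite_mul, zero_mul]
    rw [Finset.sum_comm]
    refine Finset.sum_congr rfl fun t _ => ?_
    rw [Finset.sum_ite_eq' Finset.univ (t*c) (fun k => m t * f k), if_pos (Finset.mem_univ _)]
  refine ⟨fun i j k => ?_, fun i j => ?_, fun i j k => ?_, fun i j w p => ?_⟩
  · rw [key]; exact hMnn _ _
  · rw [Finset.sum_congr rfl fun k _ => key i j k]; exact hMsum _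
  · rw [key, key, mul_comm i j]
  · simp only [key]
    rw [collapse (i*j) (fun k => M p (k * w)), collapse (j*w) (fun q => M p (i * q))]
    refine Finset.sum_congr rfl fun t _ => ?_
    congr 2
    simp [mul_assoc, mul_comm, mul_left_comm]
end
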